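/- Let I be a positive integer and let F ∈ (0, ∞)^I. Then 1/F_{k₂+k₃} = 1/F_{k₂} + 1/F_{k₃} holds for all k₂, k₃ ∈ {1,…,I} with k₂ + k₃ ≤ I if and only if there exists ρ > 0 such that F_k = 1/(ρk) for every k ∈ {1,…,I}. -/

import Mathlib

open scoped BigOperators

/-- Characterization of equilibria of the discrete exact-resonance acoustic kinetic system:
for `F ∈ (0,∞)^I`, the relations `1/F_{k₂+k₃} = 1/F_{k₂} + 1/F_{k₃}` (for all `k₂+k₃ ≤ I`)
hold iff `F_k = 1/(ρk)` for some `ρ > 0`. -/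
theorem equilibrium_characterization (I : ℕ) (hI : 0 < I)
    (F : ℕ → ℝ) (hF : ∀ k ∈ Finset.Icc 1 I, 0 < F k) :
    (∀ k2 ∈ Finset.Icc 1 I, ∀ k3 ∈ Finset.Icc 1 I, k2 + k3 ≤ I →
        1 / F (k2 + k3) = 1 / F k2 + 1 / F k3) ↔
      ∃ ρ : ℝ, 0 < ρ ∧ ∀ k ∈ Finset.Icc 1 I, F k = 1 / (ρ * k) := by
  simp only [Finset.mem_Icc] at *
  constructor
  · intro h
    have h1 : 0 < F 1 := hF 1 ⟨le_refl 1, hI⟩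
    refine ⟨1 / F 1, by positivity, ?_⟩
    have key : ∀ k, 1 ≤ k → k ≤ I → 1 / F k = k / F 1 := by
      intro k
      induction k with
      | zero => omega
      | succ n ih =>
        intro _ hkI
        rcases Nat.eq_or_lt_of_le (show 1 ≤ n + 1 from by omega) with h0 | h0
        · simp [← h0]
        · have hn1 : 1 ≤ n := by omega
          have := h n ⟨hn1, by omega⟩ 1 ⟨le_refl 1, hI⟩ hkI
          rw [this, ih hn1 (by omega)]
          push_cast
          ring
    intro k hk
    have hFk := hF k hk
    have hk' := key k hk.1 hk.2
    have hkpos : (0:ℝ) < k := by exact_mod_cast hk.1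
    field_simp at hk' ⊢
    linarith [hk']
  · rintro ⟨ρ, hρ, hFeq⟩
    intro k2 hk2 k3 hk3 hsum
    have h2 : (0:ℝ) < k2 := by exact_mod_cast hk2.1
    have h3 : (0:ℝ) < k3 := by exact_mod_cast hk3.1
    rw [hFeq k2 hk2, hFeq k3 hk3, hFeq (k2 + k3) ⟨by omega, hsum⟩]
    push_cast
    field_simp
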